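/- For any Weil-algebra A and any m, n ≥ 0, the commutative square in Weil formed by the four maps A ⊗ W^{m+n} → A ⊗ W^m, A ⊗ W^{m+n} → A ⊗ Wⁿ, A ⊗ W^m → A and A ⊗ Wⁿ → A, all induced by the augmentations Wⁿ → ℕ and W^m → ℕ respectively (where W^{m+n} is identified with the Weil-algebra whose first m generators map to the generators of W^m and last n generators map to the generators of Wⁿ), is a pullback square in the category Weil. -/

import Mathlib

open MvPolynomial

/-- A presentation of a Weil-algebra: a finite set of generators together with a
reflexive symmetric relation `sim`; the algebra is `ℕ[xᵢ]/(xᵢxⱼ : sim i j)`. -/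
structure WeilPres where
  ι : Type
  fintypeI : Fintype ι
  sim : ι → ι → Prop
  refl : ∀ i, sim i i
  symm : ∀ i j, sim i j → sim j i

attribute [instance] WeilPres.fintypeI

/-- The underlying commutative semiring `ℕ[x₁,…,xₙ]/(xᵢxⱼ : i ∼ j)` of a Weil presentation. -/
def WeilPres.Carrier (P : WeilPres) : Type :=
  (ringConGen fun p q : MvPolynomial P.ι ℕ =>
    ∃ i j, P.sim i j ∧ p = X i * X j ∧ q = 0).Quotient

noncomputable instance (P : WeilPres) : CommSemiring P.Carrier :=
  inferInstanceAs (CommSemiring (RingCon.Quotient _))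

/-- The generator `xᵢ` of the Weil-algebra presented by `P`. -/
noncomputable def WeilPres.gen (P : WeilPres) (i : P.ι) : P.Carrier :=
  RingCon.mk' _ (X i)

/-- Tensor product (coproduct) of Weil presentations: concatenation of generators. -/
def WeilPres.tensor (P Q : WeilPres) : WeilPres where
  ι := P.ι ⊕ Q.ι
  fintypeI := inferInstance
  sim := Sum.LiftRel P.sim Q.sim
  refl i := by cases i with
    | inl a => exact Sum.LiftRel.inl (P.refl a)
    | inr a => exact Sum.LiftRel.inr (Q.refl a)
  symm i j h := by cases h with
    | inl h => exact Sum.LiftRel.inl (P.symm _ _ h)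
    | inr h => exact Sum.LiftRel.inr (Q.symm _ _ h)

/-- `Wⁿ = ℕ[x₁,…,xₙ]/(xᵢxⱼ)`: all pairwise products of generators vanish. -/
def WnPres (n : ℕ) : WeilPres where
  ι := Fin n
  fintypeI := inferInstance
  sim _ _ := True
  refl _ := trivial
  symm _ _ _ := trivial

/-- `ℕ` itself, as the Weil-algebra with no generators. -/
def NPres : WeilPres where
  ι := Empty
  fintypeI := inferInstance
  sim _ _ := True
  refl _ := trivial
  symm _ _ _ := trivial


/-! ### Auxiliary machinery -/

/-- The canonical projection onto the quotient. -/
noncomputable def WeilPres.π (P : WeilPres) : MvPolynomial P.ι ℕ →+* P.Carrier :=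
  RingCon.mk' _

lemma WeilPres.π_surjective (P : WeilPres) : Function.Surjective P.π := by
  intro x; exact Quot.induction_on x fun p => ⟨p, rfl⟩

lemma WeilPres.gen_mul (P : WeilPres) {i j : P.ι} (h : P.sim i j) :
    P.gen i * P.gen j = 0 := by
  show P.π (X i) * P.π (X j) = 0
  rw [← map_mul, show (0 : P.Carrier) = P.π 0 from (map_zero _).symm]
  exact (RingCon.eq _).2 (RingConGen.Rel.of _ _ ⟨i, j, h, rfl, rfl⟩)

/-- Ring homomorphisms out of a Weil algebra are determined by their values on generators. -/
lemma WeilPres.hom_ext {P : WeilPres} {S : Type*} [Semiring S]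
    {f g : P.Carrier →+* S} (h : ∀ i, f (P.gen i) = g (P.gen i)) : f = g := by
  have : f.comp P.π = g.comp P.π := by
    apply MvPolynomial.ringHom_ext
    · intro n
      show (f.comp P.π) (C n) = (g.comp P.π) (C n)
      have e : (C n : MvPolynomial P.ι ℕ) = (n : MvPolynomial P.ι ℕ) := by
        simpa using MvPolynomial.C_eq_coe_nat (σ := P.ι) n
      rw [e, map_natCast, map_natCast]
    · intro i
      exact h i
  exact RingHom.ext fun x => by
    obtain ⟨p, rfl⟩ := P.π_surjective x
    exact congrArg (fun k => k p) (congrArg DFunLike.coe this)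

/-- Universal property: lift a choice of generator images killing the relations. -/
noncomputable def WeilPres.liftHom (P : WeilPres) {S : Type*} [CommSemiring S] (e : P.ι → S)
    (he : ∀ i j, P.sim i j → e i * e j = 0) : P.Carrier →+* S := by
  let ψ₀ : MvPolynomial P.ι ℕ →+* S := eval₂Hom (Nat.castRingHom S) e
  have sound : ∀ p q : MvPolynomial P.ι ℕ,
      RingConGen.Rel (fun p q => ∃ i j, P.sim i j ∧ p = X i * X j ∧ q = 0) p q →
      ψ₀ p = ψ₀ q := by
    intro p q h
    induction h with
    | of x y hxy =>
      obtain ⟨i, j, hij, rfl, rfl⟩ := hxy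
      simp [ψ₀, he i j hij]
    | refl x => rfl
    | symm _ ih => exact ih.symm
    | trans _ _ ih₁ ih₂ => exact ih₁.trans ih₂
    | add _ _ ih₁ ih₂ => rw [map_add, map_add, ih₁, ih₂]
    | mul _ _ ih₁ ih₂ => rw [map_mul, map_mul, ih₁, ih₂]
  exact
  { toFun := Quotient.lift ψ₀ sound
    map_one' := map_one ψ₀
    map_zero' := map_zero ψ₀
    map_add' := fun x y => Quotient.inductionOn₂ x y fun p q => map_add ψ₀ p q
    map_mul' := fun x y => Quotient.inductionOn₂ x y fun p q => map_mul ψ₀ p q }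

@[simp] lemma WeilPres.liftHom_gen (P : WeilPres) {S : Type*} [CommSemiring S] (e : P.ι → S)
    (he : ∀ i j, P.sim i j → e i * e j = 0) (i : P.ι) :
    P.liftHom e he (P.gen i) = e i := by
  show (eval₂Hom (Nat.castRingHom S) e) (X i) = e i
  simp

namespace WeilAux

open TrivSqZeroExt

variable (P : WeilPres)

/-- The model `A ⊕ Aᵏ` of `A ⊗ Wᵏ`. -/
abbrev D (k : ℕ) : Type := TrivSqZeroExt P.Carrier (Fin k → P.Carrier)

/-- The generator `yᵦ` of `A ⊗ Wᵏ`. -/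
noncomputable def Y (k : ℕ) (b : Fin k) : (P.tensor (WnPres k)).Carrier :=
  (P.tensor (WnPres k)).gen (Sum.inr b)

lemma Y_mul_Y (k : ℕ) (b b' : Fin k) : Y P k b * Y P k b' = 0 :=
  (P.tensor (WnPres k)).gen_mul (Sum.LiftRel.inr trivial)

/-- The inclusion `A → A ⊗ Wᵏ`. -/
noncomputable def iota (k : ℕ) : P.Carrier →+* (P.tensor (WnPres k)).Carrier :=
  P.liftHom (fun a => (P.tensor (WnPres k)).gen (Sum.inl a))
    (fun _ _ h => (P.tensor (WnPres k)).gen_mul (Sum.LiftRel.inl h))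

@[simp] lemma iota_gen (k : ℕ) (a : P.ι) :
    iota P k (P.gen a) = (P.tensor (WnPres k)).gen (Sum.inl a) :=
  P.liftHom_gen _ _ a

/-- The comparison map `A ⊗ Wᵏ → A ⊕ Aᵏ`. -/
noncomputable def psi (k : ℕ) : (P.tensor (WnPres k)).Carrier →+* D P k :=
  (P.tensor (WnPres k)).liftHom
    (Sum.elim (fun a => inl (P.gen a)) (fun b => inr (Pi.single b 1)))
    (by
      rintro i j h
      cases h with
      | inl h =>
        show (inl (P.gen _) : D P k) * inl (P.gen _) = 0
        rw [inl_mul_inl, P.gen_mul h, inl_zero]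
      | inr h =>
        show (inr (Pi.single _ 1) : D P k) * inr (Pi.single _ 1) = 0
        rw [inr_mul_inr])

@[simp] lemma psi_gen_inl (k : ℕ) (a : P.ι) :
    psi P k ((P.tensor (WnPres k)).gen (Sum.inl a)) = inl (P.gen a) :=
  (P.tensor (WnPres k)).liftHom_gen _ _ (Sum.inl a)

@[simp] lemma psi_gen_inr (k : ℕ) (b : Fin k) :
    psi P k ((P.tensor (WnPres k)).gen (Sum.inr b)) = inr (Pi.single b 1) :=
  (P.tensor (WnPres k)).liftHom_gen _ _ (Sum.inr b)

@[simp] lemma psi_iota (k : ℕ) (a : P.Carrier) : psi P k (iota P k a) = inl a := by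
  have : (psi P k).comp (iota P k) = inlHom P.Carrier (Fin k → P.Carrier) :=
    WeilPres.hom_ext fun i => by simp [inlHom]
  exact congrArg (fun f => f a) (congrArg DFunLike.coe this)

/-- The inverse comparison map `A ⊕ Aᵏ → A ⊗ Wᵏ`, as a ring homomorphism. -/
noncomputable def phi (k : ℕ) : D P k →+* (P.tensor (WnPres k)).Carrier where
  toFun x := iota P k x.fst + ∑ b, iota P k (x.snd b) * Y P k b
  map_one' := by simp
  map_zero' := by simp
  map_add' x y := by
    simp only [fst_add, snd_add, map_add, Pi.add_apply, add_mul, Finset.sum_add_distrib]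
    ring
  map_mul' x y := by
    simp only [fst_mul, snd_mul, map_add, Pi.add_apply, Pi.smul_apply, smul_eq_mul,
      MulOpposite.smul_eq_mul_unop, MulOpposite.unop_op, map_mul, add_mul, mul_add,
      Finset.sum_add_distrib, Finset.mul_sum, Finset.sum_mul]
    have hzero : (∑ b' : Fin k, ∑ b : Fin k,
        iota P k (x.snd b) * Y P k b * (iota P k (y.snd b') * Y P k b')) = 0 :=
      Finset.sum_eq_zero fun b' _ => Finset.sum_eq_zero fun b _ => by
        rw [mul_mul_mul_comm, Y_mul_Y, mul_zero]
    have h2 : ∑ i : Fin k, iota P k (x.snd i) * Y P k i * iota P k y.fst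
        = ∑ i : Fin k, iota P k (x.snd i) * iota P k y.fst * Y P k i :=
      Finset.sum_congr rfl fun i _ => by ring
    have h1 : ∑ i : Fin k, iota P k x.fst * (iota P k (y.snd i) * Y P k i)
        = ∑ i : Fin k, iota P k x.fst * iota P k (y.snd i) * Y P k i :=
      Finset.sum_congr rfl fun i _ => by ring
    rw [hzero, add_zero, h2, h1]
    ring

lemma phi_psi (k : ℕ) (t : (P.tensor (WnPres k)).Carrier) : phi P k (psi P k t) = t := by
  have keyl : ∀ a : P.ι, phi P k (psi P k ((P.tensor (WnPres k)).gen (Sum.inl a)))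
      = (P.tensor (WnPres k)).gen (Sum.inl a) := by
    intro a
    rw [psi_gen_inl]
    show iota P k (P.gen a) + ∑ b, iota P k ((0 : Fin k → P.Carrier) b) * Y P k b = _
    simp
  have keyr : ∀ b : Fin k, phi P k (psi P k ((P.tensor (WnPres k)).gen (Sum.inr b)))
      = (P.tensor (WnPres k)).gen (Sum.inr b) := by
    intro b
    rw [psi_gen_inr]
    show iota P k (0 : P.Carrier)
      + ∑ b' : Fin k, iota P k ((Pi.single b 1 : Fin k → P.Carrier) b') * Y P k b' = _
    rw [map_zero, zero_add, Finset.sum_eq_single b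
      (fun b' _ hb' => by rw [Pi.single_apply, if_neg hb', map_zero, zero_mul])
      (fun h => absurd (Finset.mem_univ b) h)]
    simp [Y]
  have : (phi P k).comp (psi P k) = RingHom.id _ := by
    apply WeilPres.hom_ext
    rintro (a | b)
    · exact keyl a
    · exact keyr b
  exact congrArg (fun f => f t) (congrArg DFunLike.coe this)

lemma psi_phi (k : ℕ) (x : D P k) : psi P k (phi P k x) = x := by
  show psi P k (iota P k x.fst + ∑ b, iota P k (x.snd b) * Y P k b) = x
  rw [map_add, map_sum, psi_iota]
  have : ∀ b : Fin k, psi P k (iota P k (x.snd b) * Y P k b)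
      = TrivSqZeroExt.inr (Pi.single b (x.snd b)) := by
    intro b
    rw [map_mul, psi_iota]
    show TrivSqZeroExt.inl (x.snd b) * psi P k ((P.tensor (WnPres k)).gen (Sum.inr b)) = _
    rw [psi_gen_inr, TrivSqZeroExt.inl_mul_inr]
    congr 1
    ext b'
    simp [Pi.single_apply]
  rw [Finset.sum_congr rfl fun b _ => this b]
  have hsum : ∑ b : Fin k, (TrivSqZeroExt.inr (Pi.single b (x.snd b)) : D P k)
      = TrivSqZeroExt.inr x.snd := by
    apply TrivSqZeroExt.ext
    · rw [TrivSqZeroExt.fst_sum, TrivSqZeroExt.fst_inr]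
      exact Finset.sum_eq_zero fun b _ => TrivSqZeroExt.fst_inr _ _
    · rw [TrivSqZeroExt.snd_sum, TrivSqZeroExt.snd_inr]
      rw [Finset.sum_congr rfl fun b _ => TrivSqZeroExt.snd_inr _ _]
      exact Finset.univ_sum_single x.snd
  rw [hsum, TrivSqZeroExt.inl_fst_add_inr_snd_eq]

lemma psi_bijective (k : ℕ) : Function.Bijective (psi P k) :=
  ⟨Function.LeftInverse.injective (phi_psi P k),
   Function.RightInverse.surjective fun x => psi_phi P k x⟩

/-- `fst` as a ring homomorphism. -/
def fstH (k : ℕ) : D P k →+* P.Carrier where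
  toFun := TrivSqZeroExt.fst
  map_one' := rfl
  map_mul' x y := TrivSqZeroExt.fst_mul x y
  map_zero' := rfl
  map_add' x y := rfl

/-- Precomposition on the nilpotent part, as a ring homomorphism. -/
def precomp {k l : ℕ} (h : Fin l → Fin k) : D P k →+* D P l where
  toFun x := (x.fst, x.snd ∘ h)
  map_one' := TrivSqZeroExt.ext rfl (funext fun _ => rfl)
  map_mul' x y := TrivSqZeroExt.ext rfl (funext fun _ => rfl)
  map_zero' := TrivSqZeroExt.ext rfl (funext fun _ => rfl)
  map_add' x y := TrivSqZeroExt.ext rfl (funext fun _ => rfl)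

/-- Pairing two compatible maps into the models. -/
noncomputable def pair {Qc : Type*} [CommSemiring Qc] {m n : ℕ}
    (s : Qc →+* D P m) (t : Qc →+* D P n) (hst : ∀ q, (s q).fst = (t q).fst) :
    Qc →+* D P (m + n) where
  toFun q := ((s q).fst,
    Fin.addCases (motive := fun _ => P.Carrier) ((s q).snd) ((t q).snd))
  map_one' := by
    apply TrivSqZeroExt.ext
    · simp
    · funext i
      induction i using Fin.addCases with
      | left b => simp [TrivSqZeroExt.snd_one]
      | right b => simp [TrivSqZeroExt.snd_one]
  map_mul' x y := by
    apply TrivSqZeroExt.ext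
    · simp [TrivSqZeroExt.fst_mul]; rfl
    · show _ = ((_ : D P (m+n)) * (_ : D P (m+n))).snd
      funext i
      erw [TrivSqZeroExt.snd_mul]
      induction i using Fin.addCases with
      | left b =>
        simp only [Fin.addCases_left, TrivSqZeroExt.fst_mk, TrivSqZeroExt.snd_mk, map_mul, TrivSqZeroExt.snd_mul, Pi.add_apply,
          Pi.smul_apply, smul_eq_mul, MulOpposite.smul_eq_mul_unop, MulOpposite.unop_op,
          TrivSqZeroExt.fst_mul]
      | right b =>
        simp only [Fin.addCases_right, TrivSqZeroExt.fst_mk, TrivSqZeroExt.snd_mk, map_mul, TrivSqZeroExt.snd_mul, Pi.add_apply,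
          Pi.smul_apply, smul_eq_mul, MulOpposite.smul_eq_mul_unop, MulOpposite.unop_op,
          TrivSqZeroExt.fst_mul, hst]
  map_zero' := by
    apply TrivSqZeroExt.ext
    · simp
    · funext i
      induction i using Fin.addCases with
      | left b => simp
      | right b => simp
  map_add' x y := by
    apply TrivSqZeroExt.ext
    · simp; rfl
    · funext i
      induction i using Fin.addCases with
      | left b => erw [TrivSqZeroExt.snd_add]; simp
      | right b => erw [TrivSqZeroExt.snd_add]; simp

end WeilAux

/-- The foundational squares: for any Weil-algebra `A` and `m, n ≥ 0`, the square
`A ⊗ W^{m+n} → A ⊗ W^m, A ⊗ Wⁿ → A` (all maps induced by the augmentations of `Wⁿ`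
resp. `W^m`) is a pullback in the category `Weil`. -/
theorem foundational_pullback (P : WeilPres) (m n : ℕ)
    (f₁ : (P.tensor (WnPres (m + n))).Carrier →+* (P.tensor (WnPres m)).Carrier)
    (f₂ : (P.tensor (WnPres (m + n))).Carrier →+* (P.tensor (WnPres n)).Carrier)
    (g₁ : (P.tensor (WnPres m)).Carrier →+* P.Carrier)
    (g₂ : (P.tensor (WnPres n)).Carrier →+* P.Carrier)
    (hf₁A : ∀ a : P.ι, f₁ ((P.tensor (WnPres (m + n))).gen (Sum.inl a)) =
      (P.tensor (WnPres m)).gen (Sum.inl a))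
    (hf₁m : ∀ b : Fin m, f₁ ((P.tensor (WnPres (m + n))).gen (Sum.inr (Fin.castAdd n b))) =
      (P.tensor (WnPres m)).gen (Sum.inr b))
    (hf₁n : ∀ b : Fin n, f₁ ((P.tensor (WnPres (m + n))).gen (Sum.inr (Fin.natAdd m b))) = 0)
    (hf₂A : ∀ a : P.ι, f₂ ((P.tensor (WnPres (m + n))).gen (Sum.inl a)) =
      (P.tensor (WnPres n)).gen (Sum.inl a))
    (hf₂m : ∀ b : Fin m, f₂ ((P.tensor (WnPres (m + n))).gen (Sum.inr (Fin.castAdd n b))) = 0)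
    (hf₂n : ∀ b : Fin n, f₂ ((P.tensor (WnPres (m + n))).gen (Sum.inr (Fin.natAdd m b))) =
      (P.tensor (WnPres n)).gen (Sum.inr b))
    (hg₁A : ∀ a : P.ι, g₁ ((P.tensor (WnPres m)).gen (Sum.inl a)) = P.gen a)
    (hg₁m : ∀ b : Fin m, g₁ ((P.tensor (WnPres m)).gen (Sum.inr b)) = 0)
    (hg₂A : ∀ a : P.ι, g₂ ((P.tensor (WnPres n)).gen (Sum.inl a)) = P.gen a)
    (hg₂n : ∀ b : Fin n, g₂ ((P.tensor (WnPres n)).gen (Sum.inr b)) = 0) :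
    g₁.comp f₁ = g₂.comp f₂ ∧
    ∀ (Q : WeilPres) (u : Q.Carrier →+* (P.tensor (WnPres m)).Carrier)
      (v : Q.Carrier →+* (P.tensor (WnPres n)).Carrier),
      g₁.comp u = g₂.comp v →
      ∃! w : Q.Carrier →+* (P.tensor (WnPres (m + n))).Carrier,
        f₁.comp w = u ∧ f₂.comp w = v := by
  classical
  open WeilAux TrivSqZeroExt in
  -- identification of the augmentations with `fst` after the comparison iso
  have hg₁ : g₁ = (fstH P m).comp (psi P m) := by
    apply WeilPres.hom_ext
    rintro (a | b)
    · rw [RingHom.comp_apply, psi_gen_inl, hg₁A a]; rfl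
    · rw [RingHom.comp_apply, psi_gen_inr P m b, hg₁m b]; rfl
  have hg₂ : g₂ = (fstH P n).comp (psi P n) := by
    apply WeilPres.hom_ext
    rintro (a | b)
    · rw [RingHom.comp_apply, psi_gen_inl, hg₂A a]; rfl
    · rw [RingHom.comp_apply, psi_gen_inr P n b, hg₂n b]; rfl
  -- identification of f₁, f₂ with the precomposition maps
  have hF₁ : (psi P m).comp f₁ = (precomp P (Fin.castAdd n)).comp (psi P (m + n)) := by
    apply WeilPres.hom_ext
    rintro (a | i)
    · rw [RingHom.comp_apply, RingHom.comp_apply, hf₁A a, psi_gen_inl, psi_gen_inl]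
      exact TrivSqZeroExt.ext rfl (funext fun _ => rfl)
    · refine Fin.addCases (motive := fun i =>
        ((psi P m).comp f₁) ((P.tensor (WnPres (m + n))).gen (Sum.inr i)) =
        ((precomp P (Fin.castAdd n)).comp (psi P (m + n)))
          ((P.tensor (WnPres (m + n))).gen (Sum.inr i))) ?_ ?_ i
      · intro b
        rw [RingHom.comp_apply, RingHom.comp_apply, hf₁m b, psi_gen_inr, psi_gen_inr]
        refine TrivSqZeroExt.ext rfl ?_
        funext b'
        show (Pi.single b 1 : Fin m → P.Carrier) b'
          = (Pi.single (Fin.castAdd n b) 1 : Fin (m + n) → P.Carrier) (Fin.castAdd n b')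
        simp [Pi.single_apply, Fin.ext_iff]
      · intro b
        rw [RingHom.comp_apply, RingHom.comp_apply, hf₁n b, map_zero, psi_gen_inr]
        symm
        apply TrivSqZeroExt.ext
        · rfl
        · funext b'
          show (Pi.single (Fin.natAdd m b) 1 : Fin (m + n) → P.Carrier) (Fin.castAdd n b') = 0
          have hne : Fin.castAdd n b' ≠ Fin.natAdd m b := by
            intro hq
            have hq' := congrArg Fin.val hq
            simp only [Fin.coe_castAdd, Fin.coe_natAdd] at hq'
            omega
          rw [Pi.single_apply, if_neg hne]
  have hF₂ : (psi P n).comp f₂ = (precomp P (Fin.natAdd m)).comp (psi P (m + n)) := by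
    apply WeilPres.hom_ext
    rintro (a | i)
    · rw [RingHom.comp_apply, RingHom.comp_apply, hf₂A a, psi_gen_inl, psi_gen_inl]
      exact TrivSqZeroExt.ext rfl (funext fun _ => rfl)
    · refine Fin.addCases (motive := fun i =>
        ((psi P n).comp f₂) ((P.tensor (WnPres (m + n))).gen (Sum.inr i)) =
        ((precomp P (Fin.natAdd m)).comp (psi P (m + n)))
          ((P.tensor (WnPres (m + n))).gen (Sum.inr i))) ?_ ?_ i
      · intro b
        rw [RingHom.comp_apply, RingHom.comp_apply, hf₂m b, map_zero, psi_gen_inr]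
        symm
        apply TrivSqZeroExt.ext
        · rfl
        · funext b'
          show (Pi.single (Fin.castAdd n b) 1 : Fin (m + n) → P.Carrier) (Fin.natAdd m b') = 0
          have hne : Fin.natAdd m b' ≠ Fin.castAdd n b := by
            intro hq
            have hq' := congrArg Fin.val hq
            simp only [Fin.coe_castAdd, Fin.coe_natAdd] at hq'
            omega
          rw [Pi.single_apply, if_neg hne]
      · intro b
        rw [RingHom.comp_apply, RingHom.comp_apply, hf₂n b, psi_gen_inr, psi_gen_inr]
        refine TrivSqZeroExt.ext rfl ?_
        funext b'
        show (Pi.single b 1 : Fin n → P.Carrier) b'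
          = (Pi.single (Fin.natAdd m b) 1 : Fin (m + n) → P.Carrier) (Fin.natAdd m b')
        simp [Pi.single_apply, Fin.ext_iff]
  constructor
  · -- the square commutes
    apply WeilPres.hom_ext
    rintro (a | i)
    · rw [RingHom.comp_apply, RingHom.comp_apply, hf₁A a, hf₂A a, hg₁A a, hg₂A a]
    · refine Fin.addCases (motive := fun i =>
        (g₁.comp f₁) ((P.tensor (WnPres (m + n))).gen (Sum.inr i)) =
        (g₂.comp f₂) ((P.tensor (WnPres (m + n))).gen (Sum.inr i))) ?_ ?_ i
      · intro b
        rw [RingHom.comp_apply, RingHom.comp_apply, hf₁m b, hf₂m b, hg₁m b, map_zero]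
      · intro b
        rw [RingHom.comp_apply, RingHom.comp_apply, hf₁n b, hf₂n b, map_zero, hg₂n b]
  · intro Q u v huv
    set s : Q.Carrier →+* D P m := (psi P m).comp u with hs
    set t : Q.Carrier →+* D P n := (psi P n).comp v with ht
    have hst : ∀ q, (s q).fst = (t q).fst := by
      intro q
      have := congrArg (fun k => k q) (congrArg DFunLike.coe huv)
      simp only [RingHom.coe_comp, Function.comp_apply] at this
      rw [hg₁, hg₂] at this
      exact this
    set j : Q.Carrier →+* D P (m + n) := pair P s t hst with hj
    have hinj := (psi_bijective P (m + n)).1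
    have hinjm := (psi_bijective P m).1
    have hinjn := (psi_bijective P n).1
    set e := RingEquiv.ofBijective (psi P (m + n)) (psi_bijective P (m + n)) with he
    set w : Q.Carrier →+* (P.tensor (WnPres (m + n))).Carrier :=
      (e.symm : D P (m + n) →+* (P.tensor (WnPres (m + n))).Carrier).comp j with hw
    have hpsiw : ∀ q, psi P (m + n) (w q) = j q := fun q =>
      e.apply_symm_apply (j q)
    refine ⟨w, ⟨?_, ?_⟩, ?_⟩
    · apply RingHom.ext
      intro q
      rw [RingHom.comp_apply]
      apply hinjm
      have h1 : psi P m (f₁ (w q)) = precomp P (Fin.castAdd n) (psi P (m + n) (w q)) :=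
        congrArg (fun k => k (w q)) (congrArg DFunLike.coe hF₁)
      rw [h1, hpsiw]
      apply TrivSqZeroExt.ext
      · rfl
      · funext b
        show Fin.addCases (motive := fun _ => P.Carrier) ((s q).snd) ((t q).snd)
          (Fin.castAdd n b) = _
        rw [Fin.addCases_left]
        rfl
    · apply RingHom.ext
      intro q
      rw [RingHom.comp_apply]
      apply hinjn
      have h1 : psi P n (f₂ (w q)) = precomp P (Fin.natAdd m) (psi P (m + n) (w q)) :=
        congrArg (fun k => k (w q)) (congrArg DFunLike.coe hF₂)
      rw [h1, hpsiw]
      apply TrivSqZeroExt.ext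
      · exact hst q
      · funext b
        show Fin.addCases (motive := fun _ => P.Carrier) ((s q).snd) ((t q).snd)
          (Fin.natAdd m b) = _
        rw [Fin.addCases_right]
        rfl
    · rintro w' ⟨hw1, hw2⟩
      apply RingHom.ext
      intro q
      apply hinj
      rw [hpsiw]
      have h1 : psi P m (f₁ (w' q)) = precomp P (Fin.castAdd n) (psi P (m + n) (w' q)) :=
        congrArg (fun k => k (w' q)) (congrArg DFunLike.coe hF₁)
      have h2 : psi P n (f₂ (w' q)) = precomp P (Fin.natAdd m) (psi P (m + n) (w' q)) :=
        congrArg (fun k => k (w' q)) (congrArg DFunLike.coe hF₂)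
      have hu : f₁ (w' q) = u q := by
        have := RingHom.congr_fun hw1 q
        rwa [RingHom.comp_apply] at this
      have hv : f₂ (w' q) = v q := by
        have := RingHom.congr_fun hw2 q
        rwa [RingHom.comp_apply] at this
      rw [hu] at h1
      rw [hv] at h2
      apply TrivSqZeroExt.ext
      · show (psi P (m + n) (w' q)).fst = (s q).fst
        exact congrArg TrivSqZeroExt.fst h1.symm
      · funext i
        refine Fin.addCases (motive := fun i => (psi P (m + n) (w' q)).snd i =
          Fin.addCases (motive := fun _ => P.Carrier) ((s q).snd) ((t q).snd) i) ?_ ?_ i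
        · intro b
          rw [Fin.addCases_left]
          exact congrArg (fun x : TrivSqZeroExt P.Carrier (Fin m → P.Carrier) => x.snd b) h1.symm
        · intro b
          rw [Fin.addCases_right]
          exact congrArg (fun x : TrivSqZeroExt P.Carrier (Fin n → P.Carrier) => x.snd b) h2.symm
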